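/- Let σ > 0, α > 0, c ≥ 0, and β ∈ ℝ with β ≠ 1/2 and β ≠ 1. Define φ : (0, ∞)² → ℝ by φ(u, v) := −u^{2−2β}(v + c)^{2β−1} / ((2 − 2β)(2β − 1)σ²) − (1/α²) log v. Then for all (u, v) ∈ (0, ∞)²: ∂_u²φ = u^{−2β}(v + c)^{2β−1}/σ², ∂_u∂_vφ = −u^{1−2β}(v + c)^{2β−2}/σ², ∂_v²φ = u^{2−2β}(v + c)^{2β−3}/σ² + 1/(α²v²); the determinant of the Hessian of φ equals (1/(α²v²)) ∂_u²φ > 0, so the Hessian H(φ)(u,v) is positive definite; and its inverse has entries (H(φ)⁻¹)₁₁ = α² u² v²/(v + c)² + σ² u^{2β}(v + c)^{1−2β}, (H(φ)⁻¹)₁₂ = (H(φ)⁻¹)₂₁ = α² u v²/(v + c), (H(φ)⁻¹)₂₂ = α² v². -/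

import Mathlib

/-- The Hessian matrix of `φ : ℝ × ℝ → ℝ` at `p`, via iterated Fréchet derivatives. -/
noncomputable def hess2d (φ : ℝ × ℝ → ℝ) (p : ℝ × ℝ) : Matrix (Fin 2) (Fin 2) ℝ :=
  !![fderiv ℝ (fun q => fderiv ℝ φ q ((1 : ℝ), (0 : ℝ))) p ((1 : ℝ), (0 : ℝ)),
     fderiv ℝ (fun q => fderiv ℝ φ q ((1 : ℝ), (0 : ℝ))) p ((0 : ℝ), (1 : ℝ));
     fderiv ℝ (fun q => fderiv ℝ φ q ((0 : ℝ), (1 : ℝ))) p ((1 : ℝ), (0 : ℝ)),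
     fderiv ℝ (fun q => fderiv ℝ φ q ((0 : ℝ), (1 : ℝ))) p ((0 : ℝ), (1 : ℝ))]

/-- The stochastic-volatility CEV potential of Appendix D.2:
`φ(u,v) = −u^{2−2β}(v+c)^{2β−1}/((2−2β)(2β−1)σ²) − (1/α²) log v`. -/
noncomputable def cevPot (σ α c β : ℝ) (p : ℝ × ℝ) : ℝ :=
  -(p.1 ^ (2 - 2 * β) * (p.2 + c) ^ (2 * β - 1)) / ((2 - 2 * β) * (2 * β - 1) * σ ^ 2)
    - (1 / α ^ 2) * Real.log p.2

lemma hasFDerivAt_pp (a b c : ℝ) {q : ℝ × ℝ} (h1 : 0 < q.1) (h2 : 0 < q.2 + c) :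
    HasFDerivAt (fun q : ℝ × ℝ => q.1 ^ a * (q.2 + c) ^ b)
      ((a * q.1 ^ (a - 1) * (q.2 + c) ^ b) • ContinuousLinearMap.fst ℝ ℝ ℝ +
       (b * q.1 ^ a * (q.2 + c) ^ (b - 1)) • ContinuousLinearMap.snd ℝ ℝ ℝ) q := by
  have hf : HasFDerivAt (fun q : ℝ × ℝ => q.1 ^ a)
      ((a * q.1 ^ (a - 1)) • ContinuousLinearMap.fst ℝ ℝ ℝ) q :=
    (Real.hasDerivAt_rpow_const (Or.inl h1.ne')).comp_hasFDerivAt q hasFDerivAt_fst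
  have hg0 : HasDerivAt (fun x : ℝ => (x + c) ^ b) (1 * b * (q.2 + c) ^ (b - 1)) q.2 :=
    ((hasDerivAt_id q.2).add_const c).rpow_const (Or.inl h2.ne')
  have hg : HasFDerivAt (fun q : ℝ × ℝ => (q.2 + c) ^ b)
      ((1 * b * (q.2 + c) ^ (b - 1)) • ContinuousLinearMap.snd ℝ ℝ ℝ) q :=
    hg0.comp_hasFDerivAt q hasFDerivAt_snd
  have := hf.mul hg
  exact this.congr_fderiv (by ext x <;> simp <;> ring)

lemma cevPot_hasFDerivAt' (σ α c β : ℝ) {q : ℝ × ℝ} (h1 : 0 < q.1) (h2 : 0 < q.2)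
    (hc : 0 ≤ c) :
    HasFDerivAt (cevPot σ α c β)
      ((-(1/((2 - 2*β)*(2*β-1)*σ^2))) •
          (((2 - 2*β) * q.1 ^ (2 - 2*β - 1) * (q.2 + c) ^ (2*β - 1)) • ContinuousLinearMap.fst ℝ ℝ ℝ +
           ((2*β - 1) * q.1 ^ (2 - 2*β) * (q.2 + c) ^ (2*β - 1 - 1)) • ContinuousLinearMap.snd ℝ ℝ ℝ)
        - ((1/α^2) * q.2⁻¹) • ContinuousLinearMap.snd ℝ ℝ ℝ) q := by
  have hs : 0 < q.2 + c := by linarith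
  have hpp := hasFDerivAt_pp (2 - 2*β) (2*β - 1) c h1 hs
  have hlog : HasFDerivAt (fun q : ℝ × ℝ => (1/α^2) * Real.log q.2)
      (((1/α^2) * q.2⁻¹) • ContinuousLinearMap.snd ℝ ℝ ℝ) q := by
    have := ((Real.hasDerivAt_log h2.ne').comp_hasFDerivAt q
      (hasFDerivAt_snd (p := q) (𝕜 := ℝ) (E := ℝ)))
    have h' := this.const_mul (1/α^2)
    exact h'.congr_fderiv (mul_smul _ _ _).symm
  have h := (hpp.const_mul (-(1/((2 - 2*β)*(2*β-1)*σ^2)))).sub hlog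
  have heq : cevPot σ α c β = fun q : ℝ × ℝ =>
      (-(1/((2 - 2*β)*(2*β-1)*σ^2))) * (q.1 ^ (2 - 2*β) * (q.2 + c) ^ (2*β - 1))
        - (1/α^2) * Real.log q.2 := by
    funext q; unfold cevPot; ring
  rw [heq]
  exact h

set_option maxHeartbeats 1000000 in
/-- Appendix D.2: the CEV-type Hessian martingale potential. The second
partial derivatives of `cevPot` are as computed in the paper, the Hessian is positive
definite with determinant `(1/(α²v²)) ∂_u²φ > 0`, and its inverse is the stated
stochastic-volatility CEV covariance matrix. -/
theorem cevPot_hessian (σ α c β : ℝ)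
    (hσ : 0 < σ) (hα : 0 < α) (hc : 0 ≤ c)
    (hβhalf : β ≠ 1 / 2) (hβone : β ≠ 1) :
    ∀ p : ℝ × ℝ, 0 < p.1 → 0 < p.2 →
      hess2d (cevPot σ α c β) p 0 0 =
        p.1 ^ (-(2 * β)) * (p.2 + c) ^ (2 * β - 1) / σ ^ 2 ∧
      hess2d (cevPot σ α c β) p 0 1 =
        -(p.1 ^ (1 - 2 * β) * (p.2 + c) ^ (2 * β - 2)) / σ ^ 2 ∧
      hess2d (cevPot σ α c β) p 1 0 =
        -(p.1 ^ (1 - 2 * β) * (p.2 + c) ^ (2 * β - 2)) / σ ^ 2 ∧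
      hess2d (cevPot σ α c β) p 1 1 =
        p.1 ^ (2 - 2 * β) * (p.2 + c) ^ (2 * β - 3) / σ ^ 2 + 1 / (α ^ 2 * p.2 ^ 2) ∧
      (hess2d (cevPot σ α c β) p).det =
        (1 / (α ^ 2 * p.2 ^ 2)) * hess2d (cevPot σ α c β) p 0 0 ∧
      0 < (hess2d (cevPot σ α c β) p).det ∧
      (hess2d (cevPot σ α c β) p).PosDef ∧
      (hess2d (cevPot σ α c β) p)⁻¹ =
        !![α ^ 2 * p.1 ^ 2 * p.2 ^ 2 / (p.2 + c) ^ 2 +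
             σ ^ 2 * p.1 ^ (2 * β) * (p.2 + c) ^ (1 - 2 * β),
           α ^ 2 * p.1 * p.2 ^ 2 / (p.2 + c);
           α ^ 2 * p.1 * p.2 ^ 2 / (p.2 + c), α ^ 2 * p.2 ^ 2] := by
  intro p hp1 hp2
  have hs : 0 < p.2 + c := by linarith
  have h22β : (2 - 2*β) ≠ 0 := fun h => hβone (by linarith [sub_eq_zero.mp h])
  have h2β1 : (2*β - 1) ≠ 0 := fun h => hβhalf (by
    have := sub_eq_zero.mp h; linarith)
  have hσ0 : σ ≠ 0 := hσ.ne'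
  have hα0 : α ≠ 0 := hα.ne'
  set D : ℝ := (2 - 2*β)*(2*β-1)*σ^2 with hD
  have hD0 : D ≠ 0 := by
    simp only [hD]; exact mul_ne_zero (mul_ne_zero h22β h2β1) (pow_ne_zero 2 hσ0)
  set C1 : ℝ := -(1/D) * (2 - 2*β) with hC1
  set C2 : ℝ := -(1/D) * (2*β - 1) with hC2
  clear_value D C1 C2
  -- the open condition
  have hmem : {q : ℝ × ℝ | 0 < q.1 ∧ 0 < q.2} ∈ nhds p :=
    ((isOpen_lt continuous_const continuous_fst).inter
      (isOpen_lt continuous_const continuous_snd)).mem_nhds ⟨hp1, hp2⟩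
  -- first directional derivatives as functions
  have hev1 : (fun q => fderiv ℝ (cevPot σ α c β) q ((1:ℝ), (0:ℝ))) =ᶠ[nhds p]
      (fun q : ℝ × ℝ => C1 * (q.1 ^ (2 - 2*β - 1) * (q.2 + c) ^ (2*β - 1))) := by
    filter_upwards [hmem] with q hq
    rw [(cevPot_hasFDerivAt' σ α c β hq.1 hq.2 hc).fderiv]
    simp only [ContinuousLinearMap.coe_smul', Pi.smul_apply, ContinuousLinearMap.add_apply,
      ContinuousLinearMap.sub_apply, ContinuousLinearMap.smul_apply,
      ContinuousLinearMap.coe_fst', ContinuousLinearMap.coe_snd', smul_eq_mul,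
      mul_one, mul_zero, add_zero, zero_add, sub_zero, zero_sub, neg_zero]
    rw [hC1, hD]; ring
  have hev2 : (fun q => fderiv ℝ (cevPot σ α c β) q ((0:ℝ), (1:ℝ))) =ᶠ[nhds p]
      (fun q : ℝ × ℝ => C2 * (q.1 ^ (2 - 2*β) * (q.2 + c) ^ (2*β - 1 - 1))
        - (1/α^2) * q.2⁻¹) := by
    filter_upwards [hmem] with q hq
    rw [(cevPot_hasFDerivAt' σ α c β hq.1 hq.2 hc).fderiv]
    simp only [ContinuousLinearMap.coe_smul', Pi.smul_apply, ContinuousLinearMap.add_apply,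
      ContinuousLinearMap.sub_apply, ContinuousLinearMap.smul_apply,
      ContinuousLinearMap.coe_fst', ContinuousLinearMap.coe_snd', smul_eq_mul,
      mul_one, mul_zero, add_zero, zero_add, sub_zero, zero_sub, neg_zero]
    rw [hC2, hD]; ring
  -- second derivatives
  have hd1 : HasFDerivAt
      (fun q : ℝ × ℝ => C1 * (q.1 ^ (2 - 2*β - 1) * (q.2 + c) ^ (2*β - 1)))
      (C1 • (((2 - 2*β - 1) * p.1 ^ (2 - 2*β - 1 - 1) * (p.2 + c) ^ (2*β - 1)) •
          ContinuousLinearMap.fst ℝ ℝ ℝ +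
        ((2*β - 1) * p.1 ^ (2 - 2*β - 1) * (p.2 + c) ^ (2*β - 1 - 1)) •
          ContinuousLinearMap.snd ℝ ℝ ℝ)) p :=
    (hasFDerivAt_pp (2 - 2*β - 1) (2*β - 1) c hp1 hs).const_mul C1
  have hd2 : HasFDerivAt
      (fun q : ℝ × ℝ => C2 * (q.1 ^ (2 - 2*β) * (q.2 + c) ^ (2*β - 1 - 1))
        - (1/α^2) * q.2⁻¹)
      (C2 • (((2 - 2*β) * p.1 ^ (2 - 2*β - 1) * (p.2 + c) ^ (2*β - 1 - 1)) •
          ContinuousLinearMap.fst ℝ ℝ ℝ +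
        ((2*β - 1 - 1) * p.1 ^ (2 - 2*β) * (p.2 + c) ^ (2*β - 1 - 1 - 1)) •
          ContinuousLinearMap.snd ℝ ℝ ℝ)
        - ((1/α^2) • ((-(p.2^2)⁻¹) • ContinuousLinearMap.snd ℝ ℝ ℝ))) p := by
    refine HasFDerivAt.sub
      ((hasFDerivAt_pp (2 - 2*β) (2*β - 1 - 1) c hp1 hs).const_mul C2) ?_
    have hinv : HasDerivAt (fun x : ℝ => x⁻¹) (-(p.2^2)⁻¹) p.2 := by
      simpa using hasDerivAt_inv hp2.ne'
    exact (hinv.comp_hasFDerivAt p hasFDerivAt_snd).const_mul (1/α^2)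
  have hF1 := hev1.fderiv_eq.trans hd1.fderiv
  have hF2 := hev2.fderiv_eq.trans hd2.fderiv
  -- entry values
  have e00 : fderiv ℝ (fun q => fderiv ℝ (cevPot σ α c β) q ((1:ℝ), (0:ℝ))) p ((1:ℝ), (0:ℝ)) =
      p.1 ^ (-(2 * β)) * (p.2 + c) ^ (2 * β - 1) / σ ^ 2 := by
    rw [hF1]
    simp only [ContinuousLinearMap.coe_smul', Pi.smul_apply, ContinuousLinearMap.add_apply,
      ContinuousLinearMap.sub_apply, ContinuousLinearMap.smul_apply,
      ContinuousLinearMap.coe_fst', ContinuousLinearMap.coe_snd', smul_eq_mul,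
      mul_one, mul_zero, add_zero, zero_add, sub_zero, zero_sub, neg_zero]
    rw [show (2 - 2*β - 1 - 1 : ℝ) = -(2*β) by ring]
    rw [hC1, hD]
    field_simp
    ring
  have e01 : fderiv ℝ (fun q => fderiv ℝ (cevPot σ α c β) q ((1:ℝ), (0:ℝ))) p ((0:ℝ), (1:ℝ)) =
      -(p.1 ^ (1 - 2 * β) * (p.2 + c) ^ (2 * β - 2)) / σ ^ 2 := by
    rw [hF1]
    simp only [ContinuousLinearMap.coe_smul', Pi.smul_apply, ContinuousLinearMap.add_apply,
      ContinuousLinearMap.sub_apply, ContinuousLinearMap.smul_apply,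
      ContinuousLinearMap.coe_fst', ContinuousLinearMap.coe_snd', smul_eq_mul,
      mul_one, mul_zero, add_zero, zero_add, sub_zero, zero_sub, neg_zero]
    rw [show (2 - 2*β - 1 : ℝ) = 1 - 2*β by ring, show (2*β - 1 - 1 : ℝ) = 2*β - 2 by ring]
    rw [hC1, hD]
    field_simp
  have e10 : fderiv ℝ (fun q => fderiv ℝ (cevPot σ α c β) q ((0:ℝ), (1:ℝ))) p ((1:ℝ), (0:ℝ)) =
      -(p.1 ^ (1 - 2 * β) * (p.2 + c) ^ (2 * β - 2)) / σ ^ 2 := by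
    rw [hF2]
    simp only [ContinuousLinearMap.coe_smul', Pi.smul_apply, ContinuousLinearMap.add_apply,
      ContinuousLinearMap.sub_apply, ContinuousLinearMap.smul_apply,
      ContinuousLinearMap.coe_fst', ContinuousLinearMap.coe_snd', smul_eq_mul,
      mul_one, mul_zero, add_zero, zero_add, sub_zero, zero_sub, neg_zero]
    rw [show (2 - 2*β - 1 : ℝ) = 1 - 2*β by ring, show (2*β - 1 - 1 : ℝ) = 2*β - 2 by ring]
    rw [hC2, hD]
    field_simp
  have e11 : fderiv ℝ (fun q => fderiv ℝ (cevPot σ α c β) q ((0:ℝ), (1:ℝ))) p ((0:ℝ), (1:ℝ)) =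
      p.1 ^ (2 - 2 * β) * (p.2 + c) ^ (2 * β - 3) / σ ^ 2 + 1 / (α ^ 2 * p.2 ^ 2) := by
    rw [hF2]
    simp only [ContinuousLinearMap.coe_smul', Pi.smul_apply, ContinuousLinearMap.add_apply,
      ContinuousLinearMap.sub_apply, ContinuousLinearMap.smul_apply,
      ContinuousLinearMap.coe_fst', ContinuousLinearMap.coe_snd', smul_eq_mul,
      mul_one, mul_zero, add_zero, zero_add, sub_zero, zero_sub, neg_zero]
    rw [show (2*β - 1 - 1 - 1 : ℝ) = 2*β - 3 by ring]
    rw [hC2, hD]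
    field_simp
    ring
  -- the Hessian matrix
  set a : ℝ := p.1 ^ (-(2 * β)) * (p.2 + c) ^ (2 * β - 1) / σ ^ 2 with ha
  set b : ℝ := -(p.1 ^ (1 - 2 * β) * (p.2 + c) ^ (2 * β - 2)) / σ ^ 2 with hb
  set d : ℝ := p.1 ^ (2 - 2 * β) * (p.2 + c) ^ (2 * β - 3) / σ ^ 2 + 1 / (α ^ 2 * p.2 ^ 2)
    with hd
  clear_value a b d
  have hM : hess2d (cevPot σ α c β) p = !![a, b; b, d] := by
    unfold hess2d; rw [e00, e01, e10, e11]
  have h00 : hess2d (cevPot σ α c β) p 0 0 = a := by rw [hM]; simp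
  have h01 : hess2d (cevPot σ α c β) p 0 1 = b := by rw [hM]; simp
  have h10 : hess2d (cevPot σ α c β) p 1 0 = b := by rw [hM]; simp
  have h11 : hess2d (cevPot σ α c β) p 1 1 = d := by rw [hM]; simp
  -- rpow conversions
  set X : ℝ := p.1 ^ (2*β) with hX
  set Y : ℝ := (p.2 + c) ^ (2*β) with hY
  have hXpos : 0 < X := Real.rpow_pos_of_pos hp1 _
  have hYpos : 0 < Y := Real.rpow_pos_of_pos hs _
  have r1 : p.1 ^ (-(2 * β)) = X⁻¹ := by rw [Real.rpow_neg hp1.le]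
  have r2 : p.1 ^ (1 - 2 * β) = p.1 * X⁻¹ := by
    rw [show (1 - 2*β : ℝ) = 1 + -(2*β) by ring, Real.rpow_add hp1, Real.rpow_one,
      Real.rpow_neg hp1.le]
  have r3 : p.1 ^ (2 - 2 * β) = p.1 ^ 2 * X⁻¹ := by
    rw [show (2 - 2*β : ℝ) = 2 + -(2*β) by ring, Real.rpow_add hp1,
      Real.rpow_neg hp1.le, Real.rpow_two]
  have r4 : (p.2 + c) ^ (2 * β - 1) = Y * (p.2 + c)⁻¹ := by
    rw [show (2*β - 1 : ℝ) = 2*β + -1 by ring, Real.rpow_add hs, Real.rpow_neg_one]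
  have r5 : (p.2 + c) ^ (2 * β - 2) = Y * ((p.2 + c) ^ 2)⁻¹ := by
    rw [show (2*β - 2 : ℝ) = 2*β + -2 by ring, Real.rpow_add hs,
      show ((-2:ℝ)) = -((2:ℕ):ℝ) by norm_num, Real.rpow_neg hs.le, Real.rpow_natCast]
  have r6 : (p.2 + c) ^ (2 * β - 3) = Y * ((p.2 + c) ^ 3)⁻¹ := by
    rw [show (2*β - 3 : ℝ) = 2*β + -3 by ring, Real.rpow_add hs,
      show ((-3:ℝ)) = -((3:ℕ):ℝ) by norm_num, Real.rpow_neg hs.le, Real.rpow_natCast]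
  have r7 : (p.2 + c) ^ (1 - 2 * β) = (p.2 + c) * Y⁻¹ := by
    rw [show (1 - 2*β : ℝ) = 1 + -(2*β) by ring, Real.rpow_add hs, Real.rpow_one,
      Real.rpow_neg hs.le]
  clear_value X Y
  -- determinant
  have hdet : (hess2d (cevPot σ α c β) p).det = (1 / (α ^ 2 * p.2 ^ 2)) * a := by
    rw [hM, Matrix.det_fin_two_of, ha, hb, hd, r1, r2, r3, r4, r5, r6]
    field_simp
    ring
  have hapos : 0 < a := by
    rw [ha]
    exact div_pos (mul_pos (Real.rpow_pos_of_pos hp1 _) (Real.rpow_pos_of_pos hs _))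
      (pow_pos hσ 2)
  have hdetpos : 0 < (hess2d (cevPot σ α c β) p).det := by
    rw [hdet]
    exact mul_pos (by positivity) hapos
  have hq : 0 < a * d - b * b := by
    have := hdetpos
    rwa [hM, Matrix.det_fin_two_of] at this
  -- positive definiteness
  have hPD : (hess2d (cevPot σ α c β) p).PosDef := by
    clear hev1 hev2 hd1 hd2 hF1 hF2 e00 e01 e10 e11 hmem hdet hdetpos
    clear ha hb hd hC1 hC2 hD hD0 r1 r2 r3 r4 r5 r6 r7 hXpos hYpos
    rw [hM]
    rw [Matrix.posDef_iff_dotProduct_mulVec]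
    constructor
    · ext i j
      fin_cases i <;> fin_cases j <;>
        simp [Matrix.conjTranspose_apply]
    · intro x hx
      have hform : dotProduct (star x)
            (Matrix.mulVec (!![a, b; b, d] : Matrix (Fin 2) (Fin 2) ℝ) x) =
          a * (x 0)^2 + 2 * b * (x 0) * (x 1) + d * (x 1)^2 := by
        simp [Matrix.mulVec, dotProduct, Fin.sum_univ_two]
        ring
      rw [hform]
      by_cases hx1 : x 1 = 0
      · have hx0 : x 0 ≠ 0 := by
          intro hx0; apply hx; funext i; fin_cases i <;> simp [hx0, hx1]
        rw [hx1]
        have hx0sq : 0 < (x 0)^2 := by positivity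
        have : a * (x 0)^2 + 2 * b * (x 0) * 0 + d * 0^2 = a * (x 0)^2 := by ring
        rw [this]
        exact mul_pos hapos hx0sq
      · have h1sq : 0 < (x 1)^2 := by positivity
        nlinarith [sq_nonneg (a * x 0 + b * x 1), mul_pos hq h1sq, hapos]
  -- inverse
  have hX0 : X ≠ 0 := hXpos.ne'
  have hY0 : Y ≠ 0 := hYpos.ne'
  have hs0 : p.2 + c ≠ 0 := hs.ne'
  have hp10 : p.1 ≠ 0 := hp1.ne'
  have hp20 : p.2 ≠ 0 := hp2.ne'
  have k11 : a * (α ^ 2 * p.1 ^ 2 * p.2 ^ 2 / (p.2 + c) ^ 2 +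
        σ ^ 2 * p.1 ^ (2 * β) * (p.2 + c) ^ (1 - 2 * β)) +
      b * (α ^ 2 * p.1 * p.2 ^ 2 / (p.2 + c)) = 1 := by
    rw [ha, hb, ← hX, r1, r2, r4, r5, r7]
    field_simp
    ring
  have k12 : a * (α ^ 2 * p.1 * p.2 ^ 2 / (p.2 + c)) + b * (α ^ 2 * p.2 ^ 2) = 0 := by
    rw [ha, hb, r1, r2, r4, r5]
    field_simp
    ring
  have k21 : b * (α ^ 2 * p.1 ^ 2 * p.2 ^ 2 / (p.2 + c) ^ 2 +
        σ ^ 2 * p.1 ^ (2 * β) * (p.2 + c) ^ (1 - 2 * β)) +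
      d * (α ^ 2 * p.1 * p.2 ^ 2 / (p.2 + c)) = 0 := by
    rw [hb, hd, ← hX, r2, r3, r5, r6, r7]
    field_simp
    ring
  have k22 : b * (α ^ 2 * p.1 * p.2 ^ 2 / (p.2 + c)) + d * (α ^ 2 * p.2 ^ 2) = 1 := by
    rw [hb, hd, r2, r3, r5, r6]
    field_simp
    ring
  have hinv : (hess2d (cevPot σ α c β) p)⁻¹ =
      !![α ^ 2 * p.1 ^ 2 * p.2 ^ 2 / (p.2 + c) ^ 2 +
           σ ^ 2 * p.1 ^ (2 * β) * (p.2 + c) ^ (1 - 2 * β),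
         α ^ 2 * p.1 * p.2 ^ 2 / (p.2 + c);
         α ^ 2 * p.1 * p.2 ^ 2 / (p.2 + c), α ^ 2 * p.2 ^ 2] := by
    rw [hM]
    apply Matrix.inv_eq_right_inv
    rw [Matrix.mul_fin_two, k11, k12, k21, k22, Matrix.one_fin_two]
  rw [← hX] at hinv
  exact ⟨h00, h01, h10, h11, by rw [hdet, h00], hdetpos, hPD, hinv⟩
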